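/- Let W ∈ R be an x-integral of the equation u_{xy} = F of order p ≥ 1 (W involves u_p but no u_j with j > p). Then the partial derivative ∂W/∂u_p satisfies D̄(∂W/∂u_p) + (∂F/∂u_1)·(∂W/∂u_p) = 0; equivalently, ψ = 1/(∂W/∂u_p) ∈ Frac(R) is a nonzero element satisfying D̄(ψ) = (∂F/∂u_1)·ψ. -/
import Mathlib


open MvPolynomial

noncomputable section

/-- Variables of the ring R = K[x, y, u₀, u₁, …, ū₁, ū₂, …].
`Var.ubar j` denotes the variable ū_{j+1}, so that `Var.ubar 0 = ū₁`. -/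
inductive Var : Type
  | x : Var
  | y : Var
  | u : ℕ → Var
  | ubar : ℕ → Var
  deriving DecidableEq

/-- The ring R. -/
abbrev RR (K : Type*) [CommSemiring K] : Type _ := MvPolynomial Var K

variable {K : Type*} [Field K] [CharZero K]

/-- The subring 𝓕 ⊆ R of polynomials not involving any ū_j. -/
def Fcal (K : Type*) [CommSemiring K] : Subalgebra K (RR K) :=
  MvPolynomial.supported K {v : Var | ∀ j : ℕ, v ≠ Var.ubar j}

/-- The set of variables that F may involve: x, y, u₀, u₁, ū₁. -/
def Fvars : Set Var := {Var.x, Var.y, Var.u 0, Var.u 1, Var.ubar 0}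

/-- `D` and `Dbar` are the total derivatives with respect to x and y on solutions
of u_{xy} = F, i.e. the K-derivations determined by mutual recursion by
D(x) = 1, D(y) = 0, D(uᵢ) = u_{i+1}, D(ū_i) = D̄^{i-1}(F) (i ≥ 1);
D̄(y) = 1, D̄(x) = 0, D̄(u₀) = ū₁, D̄(u_i) = D^{i-1}(F) (i ≥ 1), D̄(ū_i) = ū_{i+1}.
(Recall `Var.ubar j` denotes ū_{j+1}.)  -/
structure IsTotalDerPair (F : RR K) (D Dbar : Derivation K (RR K) (RR K)) : Prop where
  hDx : D (X Var.x) = 1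
  hDy : D (X Var.y) = 0
  hDu : ∀ i : ℕ, D (X (Var.u i)) = X (Var.u (i + 1))
  hDubar : ∀ j : ℕ, D (X (Var.ubar j)) = (⇑Dbar)^[j] F
  hDbary : Dbar (X Var.y) = 1
  hDbarx : Dbar (X Var.x) = 0
  hDbaru0 : Dbar (X (Var.u 0)) = X (Var.ubar 0)
  hDbaru : ∀ i : ℕ, Dbar (X (Var.u (i + 1))) = (⇑D)^[i] F
  hDbarubar : ∀ j : ℕ, Dbar (X (Var.ubar j)) = X (Var.ubar (j + 1))

/-- `g` is a symmetry of the equation u_{xy} = F: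
D(D̄(g)) − F_{u₁}·D(g) − F_{ū₁}·D̄(g) − F_{u₀}·g = 0. -/
def IsSymmetry (F : RR K) (D Dbar : Derivation K (RR K) (RR K)) (g : RR K) : Prop :=
  D (Dbar g) - pderiv (Var.u 1) F * D g - pderiv (Var.ubar 0) F * Dbar g
    - pderiv (Var.u 0) F * g = 0

/-- The differential operator Σ_{i=0}^k ξ_i·Df^i applied to `a`. -/
def opApply {A : Type*} [CommRing A] (Df : A → A) (ξ : ℕ → A) (k : ℕ) (a : A) : A :=
  ∑ i ∈ Finset.range (k + 1), ξ i * Df^[i] a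

/-- `ξ 0, …, ξ k` are the coefficients of an x-symmetry driver of order `k`:
`ξ k ≠ 0` and Σ ξ_i·D^i maps every x-integral to a symmetry. -/
def IsDriver (F : RR K) (D Dbar : Derivation K (RR K) (RR K)) (k : ℕ) (ξ : ℕ → RR K) : Prop :=
  ξ k ≠ 0 ∧ ∀ W : RR K, Dbar W = 0 → IsSymmetry F D Dbar (opApply ⇑D ξ k W)

/-- The Fréchet derivative a_* = Σ_{i≥0} (∂a/∂uᵢ)·D^i applied to `g`. -/
def frechet (D : Derivation K (RR K) (RR K)) (a g : RR K) : RR K :=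
  ∑ᶠ i : ℕ, pderiv (Var.u i) a * (⇑D)^[i] g

/-- The Lie bracket [f, g] = g_*(f) − f_*(g). -/
def lieBracket (D : Derivation K (RR K) (RR K)) (f g : RR K) : RR K :=
  frechet D g f - frechet D f g

/-- The fraction field Frac(R). -/
abbrev FF (K : Type*) [Field K] : Type _ := FractionRing (RR K)

/-- `DF` extends the derivation `D` of R to the fraction field Frac(R). -/
def ExtendsTo (D : Derivation K (RR K) (RR K)) (DF : Derivation K (FF K) (FF K)) : Prop :=
  ∀ p : RR K, DF (algebraMap (RR K) (FF K) p) = algebraMap (RR K) (FF K) (D p)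

/-- The Laplace invariant H₁ = −D(F_{u₁}) + F_{u₁}·F_{ū₁} + F_{u₀} (computed in R). -/
def H1R (F : RR K) (D : Derivation K (RR K) (RR K)) : RR K :=
  -(D (pderiv (Var.u 1) F)) + pderiv (Var.u 1) F * pderiv (Var.ubar 0) F
    + pderiv (Var.u 0) F

/-- The Laplace invariant H₀ = −D̄(F_{ū₁}) + F_{u₁}·F_{ū₁} + F_{u₀} (computed in R). -/
def H0R (F : RR K) (Dbar : Derivation K (RR K) (RR K)) : RR K :=
  -(Dbar (pderiv (Var.ubar 0) F)) + pderiv (Var.u 1) F * pderiv (Var.ubar 0) F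
    + pderiv (Var.u 0) F

/-- The sequence of Laplace invariants in Frac(R), defined by
H_{i+1} = 2H_i − H_{i−1} − D(D̄(H_i)/H_i) (whenever H_i ≠ 0; division is the field
division of Frac(R)). -/
def Hseq (Df Dbarf : FF K → FF K) (H0 H1 : FF K) : ℕ → FF K
  | 0 => H0
  | 1 => H1
  | (n + 2) =>
      2 * Hseq Df Dbarf H0 H1 (n + 1) - Hseq Df Dbarf H0 H1 n
        - Df (Dbarf (Hseq Df Dbarf H0 H1 (n + 1)) / Hseq Df Dbarf H0 H1 (n + 1))

/-- Auxiliary composition: `lapAux Df c H j g` is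
(1/H₁)(D − c) ∘ (1/H₂)(D − c) ∘ ⋯ ∘ (1/H_j)(D − c) ∘ g. -/
def lapAux (Df : FF K → FF K) (c : FF K) (H : ℕ → FF K) : ℕ → (FF K → FF K) → FF K → FF K
  | 0, g, a => g a
  | (j + 1), g, a => lapAux Df c H j (fun b => (Df (g b) - c * g b) / H (j + 1)) a

/-- The Laplace factorization formula: for r > 1,
𝓜 = (1/H₁)(D − F_{ū₁}) ∘ ⋯ ∘ (1/H_{r−1})(D − F_{ū₁}) ∘ (H_{r−1}⋯H₁·ψ ·);
for r = 1, 𝓜 is multiplication by ψ. -/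
def lapM (Df : FF K → FF K) (c : FF K) (H : ℕ → FF K) (ψ : FF K) (r : ℕ) : FF K → FF K :=
  lapAux Df c H (r - 1) (fun a => (∏ i ∈ Finset.Icc 1 (r - 1), H i) * ψ * a)

/-- The symmetry condition, understood in Frac(R). -/
def IsSymmetryFF (F : RR K) (DF DbarF : Derivation K (FF K) (FF K)) (g : FF K) : Prop :=
  DF (DbarF g) - algebraMap (RR K) (FF K) (pderiv (Var.u 1) F) * DF g
    - algebraMap (RR K) (FF K) (pderiv (Var.ubar 0) F) * DbarF g
    - algebraMap (RR K) (FF K) (pderiv (Var.u 0) F) * g = 0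


/-! ### Auxiliary lemmas -/

section Aux

variable {K : Type*} [Field K] [CharZero K]

/-- The set of variables allowed in a polynomial of u-order at most `m`. -/
def Svar (m : ℕ) : Set Var := {v : Var | ∀ j : ℕ, v = Var.u j → j ≤ m}

lemma x_mem_Svar (m : ℕ) : Var.x ∈ Svar m := by intro j h; cases h
lemma y_mem_Svar (m : ℕ) : Var.y ∈ Svar m := by intro j h; cases h
lemma ubar_mem_Svar (m j : ℕ) : Var.ubar j ∈ Svar m := by intro i h; cases h
lemma u_mem_Svar {m j : ℕ} (h : j ≤ m) : Var.u j ∈ Svar m := by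
  intro i hi; cases hi; exact h

lemma Svar_mono {m n : ℕ} (h : m ≤ n) : Svar m ⊆ Svar n := by
  intro v hv j hj; exact le_trans (hv j hj) h

/-- A derivation maps a supported polynomial into a subalgebra containing its values. -/
lemma deriv_mem_of_supported {E : Derivation K (RR K) (RR K)} {s : Set Var}
    {T : Subalgebra K (RR K)} (hXT : ∀ v ∈ s, (X v : RR K) ∈ T)
    (hET : ∀ v ∈ s, E (X v) ∈ T) {g : RR K} (hg : g ∈ MvPolynomial.supported K s) :
    E g ∈ T := by
  have hg' : g ∈ Algebra.adjoin K (MvPolynomial.X '' s) := hg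
  have key : ∀ a, a ∈ Algebra.adjoin K (MvPolynomial.X '' s) → a ∈ T ∧ E a ∈ T := by
    intro a ha
    induction ha using Algebra.adjoin_induction with
    | mem x hx =>
      obtain ⟨v, hv, rfl⟩ := hx
      exact ⟨hXT v hv, hET v hv⟩
    | algebraMap r =>
      refine ⟨Subalgebra.algebraMap_mem T r, ?_⟩
      rw [Derivation.map_algebraMap]
      exact Subalgebra.zero_mem T
    | add x y hx hy ihx ihy =>
      exact ⟨add_mem ihx.1 ihy.1, by rw [map_add]; exact add_mem ihx.2 ihy.2⟩
    | mul x y hx hy ihx ihy =>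
      refine ⟨mul_mem ihx.1 ihy.1, ?_⟩
      rw [Derivation.leibniz, smul_eq_mul, smul_eq_mul]
      exact add_mem (mul_mem ihx.1 ihy.2) (mul_mem ihy.1 ihx.2)
  exact (key g hg').2

lemma pderiv_eq_zero_of_supported {m j : ℕ} (h : m < j) {g : RR K}
    (hg : g ∈ MvPolynomial.supported K (Svar m)) :
    pderiv (Var.u j) g = 0 := by
  apply MvPolynomial.pderiv_eq_zero_of_notMem_vars
  intro hmem
  have hvars := (MvPolynomial.mem_supported.mp hg) hmem
  exact absurd (hvars j rfl) (by omega)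

/-- In characteristic zero, the partial derivative w.r.t. a variable occurring in `f`
is nonzero. -/
lemma pderiv_ne_zero_of_mem_vars {σ : Type*} [DecidableEq σ] {f : MvPolynomial σ K} {i : σ}
    (h : i ∈ f.vars) : pderiv i f ≠ 0 := by
  obtain ⟨m, hm, him⟩ := (MvPolynomial.mem_vars i).mp h
  intro h0
  have hcoeff : MvPolynomial.coeff (m - Finsupp.single i 1) (pderiv i f) = 0 := by
    rw [h0]; simp
  rw [f.as_sum, map_sum] at hcoeff
  simp only [MvPolynomial.pderiv_monomial, MvPolynomial.coeff_sum,
    MvPolynomial.coeff_monomial] at hcoeff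
  rw [Finset.sum_eq_single m] at hcoeff
  · rw [if_pos rfl] at hcoeff
    have h1 : MvPolynomial.coeff m f ≠ 0 := MvPolynomial.mem_support_iff.mp hm
    have h2 : (m i : K) ≠ 0 := by
      have := Finsupp.mem_support_iff.mp him
      exact_mod_cast this
    exact (mul_ne_zero h1 h2) hcoeff
  · intro s hs hsm
    by_cases hsi : s i = 0
    · simp [hsi]
    · rw [if_neg]
      intro heq
      apply hsm
      ext j
      have hj := congrArg (fun t => t j) heq
      simp only [Finsupp.tsub_apply, Finsupp.single_apply] at hj
      have hmi : m i ≠ 0 := Finsupp.mem_support_iff.mp him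
      by_cases hji : i = j
      · subst hji; simp at hj; omega
      · simp only [hji, if_false] at hj; omega
  · intro hmn; exact absurd hm hmn

section TotalDer

variable (F : RR K) (D Dbar : Derivation K (RR K) (RR K)) (hDD : IsTotalDerPair F D Dbar)
variable (hF : F ∈ MvPolynomial.supported K Fvars)

include hDD hF

lemma F_mem_S1 : F ∈ MvPolynomial.supported K (Svar 1) := by
  refine MvPolynomial.supported_mono ?_ hF
  rintro v (rfl | rfl | rfl | rfl | rfl)
  · exact x_mem_Svar 1
  · exact y_mem_Svar 1
  · exact u_mem_Svar (by norm_num)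
  · exact u_mem_Svar le_rfl
  · exact ubar_mem_Svar 1 0

lemma Dbar_mem_S1 {g : RR K} (hg : g ∈ MvPolynomial.supported K (Svar 1)) :
    Dbar g ∈ MvPolynomial.supported K (Svar 1) := by
  refine deriv_mem_of_supported (fun v hv => ?_) (fun v hv => ?_) hg
  · exact MvPolynomial.X_mem_supported.mpr hv
  · cases v with
    | x => rw [hDD.hDbarx]; exact Subalgebra.zero_mem _
    | y => rw [hDD.hDbary]; exact Subalgebra.one_mem _
    | u j =>
      have hj : j ≤ 1 := hv j rfl
      interval_cases j
      · rw [hDD.hDbaru0]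
        exact MvPolynomial.X_mem_supported.mpr (ubar_mem_Svar 1 0)
      · rw [show (1 : ℕ) = 0 + 1 from rfl, hDD.hDbaru 0]
        simpa using F_mem_S1 F D Dbar hDD hF
    | ubar j =>
      rw [hDD.hDbarubar]
      exact MvPolynomial.X_mem_supported.mpr (ubar_mem_Svar 1 (j + 1))

lemma Dbar_iter_mem_S1 (j : ℕ) : (⇑Dbar)^[j] F ∈ MvPolynomial.supported K (Svar 1) := by
  induction j with
  | zero => exact F_mem_S1 F D Dbar hDD hF
  | succ n ih =>
    rw [Function.iterate_succ_apply']
    exact Dbar_mem_S1 F D Dbar hDD hF ih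

lemma D_mem_S_succ {m : ℕ} {g : RR K} (hg : g ∈ MvPolynomial.supported K (Svar m)) :
    D g ∈ MvPolynomial.supported K (Svar (m + 1)) := by
  refine deriv_mem_of_supported (fun v hv => ?_) (fun v hv => ?_) hg
  · exact MvPolynomial.X_mem_supported.mpr (Svar_mono (Nat.le_succ m) hv)
  · cases v with
    | x => rw [hDD.hDx]; exact Subalgebra.one_mem _
    | y => rw [hDD.hDy]; exact Subalgebra.zero_mem _
    | u j =>
      rw [hDD.hDu]
      exact MvPolynomial.X_mem_supported.mpr (u_mem_Svar (by have := hv j rfl; omega))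
    | ubar j =>
      rw [hDD.hDubar]
      exact MvPolynomial.supported_mono (Svar_mono (by omega)) (Dbar_iter_mem_S1 F D Dbar hDD hF j)

lemma D_iter_mem_S (i : ℕ) : (⇑D)^[i] F ∈ MvPolynomial.supported K (Svar (i + 1)) := by
  induction i with
  | zero => exact F_mem_S1 F D Dbar hDD hF
  | succ n ih =>
    rw [Function.iterate_succ_apply']
    exact D_mem_S_succ F D Dbar hDD hF ih

lemma comm_pderiv_D (i : ℕ) (g : RR K) :
    pderiv (Var.u (i + 2)) (D g) =
      D (pderiv (Var.u (i + 2)) g) + pderiv (Var.u (i + 1)) g := by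
  have hbr : ⁅(pderiv (Var.u (i + 2)) : Derivation K (RR K) (RR K)), D⁆ =
      (pderiv (Var.u (i + 1)) : Derivation K (RR K) (RR K)) := by
    apply MvPolynomial.derivation_ext
    intro v
    rw [Derivation.commutator_apply]
    cases v with
    | x =>
      rw [hDD.hDx]
      simp
    | y =>
      rw [hDD.hDy]
      simp
    | u j =>
      rw [hDD.hDu]
      have h2 : D (pderiv (Var.u (i + 2)) (X (Var.u j)) : RR K) = 0 := by
        by_cases hj2 : j = i + 2
        · subst hj2
          rw [MvPolynomial.pderiv_X_self]
          exact D.map_one_eq_zero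
        · rw [MvPolynomial.pderiv_X_of_ne (by simpa using hj2)]
          exact map_zero _
      rw [h2, sub_zero]
      by_cases hj : j = i + 1
      · subst hj
        rw [MvPolynomial.pderiv_X_self, MvPolynomial.pderiv_X_self]
      · rw [MvPolynomial.pderiv_X_of_ne (by simpa using (show j + 1 ≠ i + 2 by omega)),
          MvPolynomial.pderiv_X_of_ne (by simpa using hj)]
    | ubar j =>
      rw [hDD.hDubar,
        pderiv_eq_zero_of_supported (m := 1) (j := i + 2) (by omega)
          (Dbar_iter_mem_S1 F D Dbar hDD hF j),
        MvPolynomial.pderiv_X_of_ne (by simp)]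
      simp
  have := congrArg (fun E : Derivation K (RR K) (RR K) => E g) hbr
  simp only [Derivation.commutator_apply] at this
  linear_combination this

lemma pderiv_D_iter (i : ℕ) :
    pderiv (Var.u (i + 1)) ((⇑D)^[i] F) = pderiv (Var.u 1) F := by
  induction i with
  | zero => rfl
  | succ n ih =>
    rw [Function.iterate_succ_apply', comm_pderiv_D F D Dbar hDD hF n,
      pderiv_eq_zero_of_supported (m := n + 1) (j := n + 2) (by omega)
        (D_iter_mem_S F D Dbar hDD hF n), map_zero, zero_add, ih]

end TotalDer

end Aux

/-- for an x-integral W of order p ≥ 1, the derivative ∂W/∂u_p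
satisfies D̄(∂W/∂u_p) + F_{u₁}·(∂W/∂u_p) = 0; equivalently ψ = 1/(∂W/∂u_p) is a
nonzero element of Frac(R) with D̄(ψ) = F_{u₁}·ψ. -/
theorem statement12
    (F : RR K) (hF : F ∈ MvPolynomial.supported K Fvars)
    (D Dbar : Derivation K (RR K) (RR K)) (hDD : IsTotalDerPair F D Dbar)
    (DbarF : Derivation K (FF K) (FF K)) (hDbarF : ExtendsTo Dbar DbarF)
    (W : RR K) (hWint : Dbar W = 0)
    (p : ℕ) (hp : 1 ≤ p)
    (hWp : pderiv (Var.u p) W ≠ 0) (hWhigh : ∀ j : ℕ, p < j → pderiv (Var.u j) W = 0) :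
    (Dbar (pderiv (Var.u p) W) + pderiv (Var.u 1) F * pderiv (Var.u p) W = 0) ∧
    ((algebraMap (RR K) (FF K) (pderiv (Var.u p) W))⁻¹ ≠ 0 ∧
      DbarF (algebraMap (RR K) (FF K) (pderiv (Var.u p) W))⁻¹ =
        algebraMap (RR K) (FF K) (pderiv (Var.u 1) F) *
          (algebraMap (RR K) (FF K) (pderiv (Var.u p) W))⁻¹) := by
  -- Part 1: the identity in R.
  classical
  have hWsupp : W ∈ MvPolynomial.supported K (Svar p) := by
    rw [MvPolynomial.mem_supported]
    intro v hv
    cases v with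
    | x => exact x_mem_Svar p
    | y => exact y_mem_Svar p
    | u j =>
      refine u_mem_Svar ?_
      by_contra hj
      exact pderiv_ne_zero_of_mem_vars hv (hWhigh j (by omega))
    | ubar j => exact ubar_mem_Svar p j
  set E : Derivation K (RR K) (RR K) :=
    ⁅(pderiv (Var.u p) : Derivation K (RR K) (RR K)), Dbar⁆ with hE
  set E' : Derivation K (RR K) (RR K) :=
    pderiv (Var.u 1) F • (pderiv (Var.u p) : Derivation K (RR K) (RR K)) with hE'
  have hEqOn : Set.EqOn (⇑E ∘ X) (⇑E' ∘ X) (Svar p) := by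
    intro v hv
    have hE'X : ∀ w : Var, E' (X w) = pderiv (Var.u 1) F * pderiv (Var.u p) (X w) := by
      intro w
      rw [hE', Derivation.smul_apply, smul_eq_mul]
    simp only [Function.comp_apply]
    rw [hE, Derivation.commutator_apply, hE'X]
    cases v with
    | x =>
      rw [hDD.hDbarx, MvPolynomial.pderiv_X_of_ne (show Var.x ≠ Var.u p by simp)]
      simp
    | y =>
      rw [hDD.hDbary, MvPolynomial.pderiv_X_of_ne (show Var.y ≠ Var.u p by simp)]
      simp
    | u j =>
      have hj : j ≤ p := hv j rfl
      cases j with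
      | zero =>
        rw [hDD.hDbaru0, MvPolynomial.pderiv_X_of_ne (show Var.ubar 0 ≠ Var.u p by simp),
          MvPolynomial.pderiv_X_of_ne (show Var.u 0 ≠ Var.u p by simp; omega)]
        simp
      | succ i =>
        rw [hDD.hDbaru i]
        by_cases hip : i + 1 = p
        · subst hip
          rw [MvPolynomial.pderiv_X_self, Derivation.map_one_eq_zero, sub_zero,
            pderiv_D_iter F D Dbar hDD hF i, mul_one]
        · rw [MvPolynomial.pderiv_X_of_ne (show Var.u (i + 1) ≠ Var.u p by simp; omega),
            map_zero, sub_zero,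
            pderiv_eq_zero_of_supported (m := i + 1) (j := p) (by omega)
              (D_iter_mem_S F D Dbar hDD hF i)]
          ring
    | ubar j =>
      rw [hDD.hDbarubar, MvPolynomial.pderiv_X_of_ne (show Var.ubar (j + 1) ≠ Var.u p by simp),
        MvPolynomial.pderiv_X_of_ne (show Var.ubar j ≠ Var.u p by simp)]
      simp
  have hmain : E W = E' W :=
    MvPolynomial.derivation_eqOn_supported hEqOn hWsupp
  have h1 : Dbar (pderiv (Var.u p) W) + pderiv (Var.u 1) F * pderiv (Var.u p) W = 0 := by
    have hL : E W = -(Dbar (pderiv (Var.u p) W)) := by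
      rw [hE, Derivation.commutator_apply, hWint, map_zero, zero_sub]
    have hR : E' W = pderiv (Var.u 1) F * pderiv (Var.u p) W := by
      rw [hE', Derivation.smul_apply, smul_eq_mul]
    rw [hL, hR] at hmain
    linear_combination -hmain
  refine ⟨h1, ?_, ?_⟩
  · exact inv_ne_zero ((map_ne_zero_iff _ (IsFractionRing.injective (RR K) (FF K))).mpr hWp)
  · set A : FF K := algebraMap (RR K) (FF K) (pderiv (Var.u p) W) with hA
    have hAne : A ≠ 0 :=
      (map_ne_zero_iff _ (IsFractionRing.injective (RR K) (FF K))).mpr hWp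
    have hDA : DbarF A = -(algebraMap (RR K) (FF K) (pderiv (Var.u 1) F) * A) := by
      rw [hA, hDbarF]
      rw [show Dbar (pderiv (Var.u p) W) = -(pderiv (Var.u 1) F * pderiv (Var.u p) W) by
        linear_combination h1]
      push_cast [map_neg, map_mul]
      ring
    set f : FF K := algebraMap (RR K) (FF K) (pderiv (Var.u 1) F) with hf
    rw [Derivation.leibniz_inv, hDA, smul_eq_mul]
    have hAA : A⁻¹ * A = 1 := inv_mul_cancel₀ hAne
    calc -A⁻¹ ^ 2 * -(f * A) = f * A⁻¹ * (A⁻¹ * A) := by ring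
      _ = f * A⁻¹ := by rw [hAA, mul_one]
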